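/- Let R be a commutative ring and I an ideal of R with |I| = t finite. Then the graph Γ(R/I)^(t) is (isomorphic to) a subgraph of Γ_I(R): explicitly, if {x_1+I,...,x_m+I} are the nonzero zero-divisors of R/I and I = {a_1,...,a_t}, then V(Γ_I(R)) = {x_j + a_i : 1 ≤ i ≤ t, 1 ≤ j ≤ m}, and whenever j ≠ l with x_j x_l ∈ I, the vertices x_j + a_i and x_l + a_k are adjacent in Γ_I(R). -/

import Mathlib

/-- The vertex set of the ideal-based zero-divisor graph `Γ_I(R)`. -/
def zdvSet (R : Type*) [CommRing R] (I : Ideal R) : Set R :=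
  {x | x ∉ I ∧ ∃ y, y ∉ I ∧ x * y ∈ I}

/-- The ideal-based zero-divisor graph `Γ_I(R)` on its vertex set. -/
def GammaI (R : Type*) [CommRing R] (I : Ideal R) : SimpleGraph (zdvSet R I) where
  Adj x y := x ≠ y ∧ (x : R) * y ∈ I
  symm := by
    constructor; rintro x y ⟨h1, h2⟩
    exact ⟨fun e => h1 e.symm, by rwa [mul_comm]⟩
  loopless := by constructor; rintro x ⟨h1, _⟩; exact h1 rfl

/-- The vertex set of the usual zero-divisor graph of a ring: nonzero zero-divisors. -/
def zdSet (S : Type*) [CommRing S] : Set S :=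
  {z | z ≠ 0 ∧ ∃ w, w ≠ 0 ∧ z * w = 0}

/-- `Γ(R/I)^(t)` is a subgraph of `Γ_I(R)`: the vertex set of `Γ_I(R)` consists of the
elements lying over the nonzero zero-divisors of `R/I`, and any two vertices lying over
distinct cosets whose product lies in `I` are adjacent in `Γ_I(R)`. -/
theorem stmt_4 (R : Type*) [CommRing R] (I : Ideal R) :
    zdvSet R I = {x : R | Ideal.Quotient.mk I x ∈ zdSet (R ⧸ I)} ∧
    (∀ x y : zdvSet R I,
      Ideal.Quotient.mk I (x : R) ≠ Ideal.Quotient.mk I (y : R) →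
      (x : R) * y ∈ I → (GammaI R I).Adj x y) := by

  constructor
  · ext x
    simp only [zdvSet, zdSet, Set.mem_setOf_eq]
    constructor
    · rintro ⟨hx, y, hy, hxy⟩
      refine ⟨by simpa [Ideal.Quotient.eq_zero_iff_mem] using hx,
        Ideal.Quotient.mk I y, by simpa [Ideal.Quotient.eq_zero_iff_mem] using hy, ?_⟩
      rw [← map_mul, Ideal.Quotient.eq_zero_iff_mem]; exact hxy
    · rintro ⟨hx, w, hw, hxw⟩
      obtain ⟨y, rfl⟩ := Ideal.Quotient.mk_surjective w
      refine ⟨by simpa [Ideal.Quotient.eq_zero_iff_mem] using hx,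
        y, by simpa [Ideal.Quotient.eq_zero_iff_mem] using hw, ?_⟩
      rwa [← map_mul, Ideal.Quotient.eq_zero_iff_mem] at hxw
  · intro x y hne hmul
    exact ⟨fun h => hne (by rw [h]), hmul⟩
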